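/- Let 0 < μ < 1/m_φ and assume F attains a finite minimal value F*. If F is level-bounded and dom φ = ℝⁿ (i.e., φ is finite everywhere), then F_μ is level-bounded. -/

import Mathlib

open scoped RealInnerProductSpace

noncomputable section

/-- `ℝⁿ` with the Euclidean norm. -/
abbrev En (n : ℕ) := EuclideanSpace ℝ (Fin n)

/-- `φ` is proper: finite somewhere and never `⊥`. -/
def ProperE {n : ℕ} (φ : En n → EReal) : Prop :=
  (∃ x, φ x ≠ ⊤) ∧ ∀ x, φ x ≠ ⊥

/-- `φ` is `m`-weakly convex: `x ↦ φ x + (m/2)‖x‖²` is convex. -/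
def WeaklyConvexOn {n : ℕ} (φ : En n → EReal) (m : ℝ) : Prop :=
  ∀ x y : En n, ∀ a b : ℝ, 0 ≤ a → 0 ≤ b → a + b = 1 →
    φ (a • x + b • y) + (((m / 2) * ‖a • x + b • y‖ ^ 2 : ℝ) : EReal) ≤
      (a : EReal) * (φ x + (((m / 2) * ‖x‖ ^ 2 : ℝ) : EReal)) +
        (b : EReal) * (φ y + (((m / 2) * ‖y‖ ^ 2 : ℝ) : EReal))

/-- `Mφ` is the Moreau envelope of `φ` with parameter `μ` and `xφ` the associated
(unique) proximal mapping. -/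
def IsMoreau {n : ℕ} (φ : En n → EReal) (μ : ℝ) (Mφ : En n → ℝ) (xφ : En n → En n) : Prop :=
  ∀ z : En n,
    (Mφ z : EReal) = φ (xφ z) + ((‖xφ z - z‖ ^ 2 / (2 * μ) : ℝ) : EReal) ∧
    (∀ x, (Mφ z : EReal) ≤ φ x + ((‖x - z‖ ^ 2 / (2 * μ) : ℝ) : EReal)) ∧
    (∀ x, φ x + ((‖x - z‖ ^ 2 / (2 * μ) : ℝ) : EReal) = (Mφ z : EReal) → x = xφ z)

/-- Real-valued version, for the convex function `g`. -/
def IsMoreauR {n : ℕ} (g : En n → ℝ) (μ : ℝ) (Mg : En n → ℝ) (xg : En n → En n) : Prop :=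
  ∀ z : En n,
    Mg z = g (xg z) + ‖xg z - z‖ ^ 2 / (2 * μ) ∧
    (∀ x, Mg z ≤ g x + ‖x - z‖ ^ 2 / (2 * μ)) ∧
    (∀ x, g x + ‖x - z‖ ^ 2 / (2 * μ) = Mg z → x = xg z)

/-- An extended-real-valued function is level-bounded if all its sublevel sets are bounded. -/
def LevelBoundedE {n : ℕ} (H : En n → EReal) : Prop :=
  ∀ α : ℝ, Bornology.IsBounded {x : En n | H x ≤ (α : EReal)}

/-- A real-valued function is level-bounded if all its sublevel sets are bounded. -/
def LevelBoundedR {n : ℕ} (H : En n → ℝ) : Prop :=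
  ∀ α : ℝ, Bornology.IsBounded {x : En n | H x ≤ α}

lemma subgrad_of_prox {n : ℕ} {g : En n → ℝ} (hg : ConvexOn ℝ Set.univ g) {μ : ℝ} (hμ : 0 < μ)
    {y z : En n} (hopt : ∀ w, g y + ‖y - z‖ ^ 2 / (2 * μ) ≤ g w + ‖w - z‖ ^ 2 / (2 * μ))
    (w : En n) : g y + ⟪z - y, w - y⟫ / μ ≤ g w := by
  by_contra hcon
  push_neg at hcon
  set c := ‖w - y‖ ^ 2 with hc
  have hc0 : 0 ≤ c := by positivity
  set d := g y + ⟪z - y, w - y⟫ / μ - g w with hd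
  have hd0 : 0 < d := by simp only [hd]; linarith
  set t : ℝ := min 1 (2 * μ * d / (c + 1)) with ht
  have ht0 : 0 < t := lt_min one_pos (by positivity)
  have ht1 : t ≤ 1 := min_le_left _ _
  have htc : t * c < 2 * μ * d := by
    have h1 : t ≤ 2 * μ * d / (c + 1) := min_le_right _ _
    have h2 : t * c ≤ (2 * μ * d / (c + 1)) * c := mul_le_mul_of_nonneg_right h1 hc0
    have h3 : (2 * μ * d / (c + 1)) * c < 2 * μ * d := by
      rw [div_mul_eq_mul_div, div_lt_iff₀ (by linarith)]
      nlinarith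
    exact h2.trans_lt h3
  set p := y + t • (w - y) with hp
  have hpc : g p ≤ (1 - t) * g y + t * g w := by
    have hcomb := hg.2 (Set.mem_univ y) (Set.mem_univ w) (by linarith : (0:ℝ) ≤ 1 - t)
      ht0.le (by ring)
    have : (1 - t) • y + t • w = p := by rw [hp]; module
    rwa [this, smul_eq_mul, smul_eq_mul] at hcomb
  have hnp : ‖p - z‖ ^ 2 = ‖y - z‖ ^ 2 + 2 * (t * ⟪y - z, w - y⟫) + t ^ 2 * c := by
    have : p - z = (y - z) + t • (w - y) := by rw [hp]; abel
    rw [this, norm_add_sq_real, real_inner_smul_right, norm_smul, Real.norm_eq_abs,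
      abs_of_pos ht0, mul_pow, hc]
  have hI : ⟪z - y, w - y⟫ = -⟪y - z, w - y⟫ := by
    rw [← neg_sub y z, inner_neg_left]
  have hoptp := hopt p
  rw [hnp] at hoptp
  have hμ' : (2 * μ) ≠ 0 := by positivity
  have e1 : (‖y - z‖ ^ 2 + 2 * (t * ⟪y - z, w - y⟫) + t ^ 2 * c) / (2 * μ)
      = ‖y - z‖ ^ 2 / (2 * μ) + t * ⟪y - z, w - y⟫ / μ + t ^ 2 * c / (2 * μ) := by
    field_simp
  rw [e1] at hoptp
  have hIμ : ⟪z - y, w - y⟫ / μ = -(⟪y - z, w - y⟫ / μ) := by rw [hI]; ring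
  have hdiv : t * ⟪y - z, w - y⟫ / μ = t * (⟪y - z, w - y⟫ / μ) := by ring
  have htcd : t ^ 2 * c / (2 * μ) = t * (t * c / (2 * μ)) := by ring
  have htlt : t * c / (2 * μ) < d := by
    rw [div_lt_iff₀ (by positivity)]; linarith
  nlinarith [mul_lt_mul_of_pos_left htlt ht0, mul_pos ht0 hd0]

/-- if `F` is level-bounded and `dom φ = ℝⁿ` then `F_μ` is
level-bounded. -/
theorem stmt12 {n : ℕ} (φ : En n → EReal) (g : En n → ℝ) (mφ μ : ℝ)
    (hproper : ProperE φ) (hlsc : LowerSemicontinuous φ)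
    (hmφ : 0 ≤ mφ) (hweak : WeaklyConvexOn φ mφ)
    (hg : ConvexOn ℝ Set.univ g)
    (hμ : 0 < μ) (hμm : μ * mφ < 1)
    (Fstar : ℝ)
    (hmin : ∃ xs : En n, φ xs - ((g xs : ℝ) : EReal) = (Fstar : EReal) ∧
      ∀ x, (Fstar : EReal) ≤ φ x - ((g x : ℝ) : EReal))
    (Mφ : En n → ℝ) (xφ : En n → En n) (hφprox : IsMoreau φ μ Mφ xφ)
    (Mg : En n → ℝ) (xg : En n → En n) (hgprox : IsMoreauR g μ Mg xg)
    (hFlb : LevelBoundedE (fun x => φ x - ((g x : ℝ) : EReal)))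
    (hdom : ∀ x : En n, φ x ≠ ⊤) :
    LevelBoundedR (fun z => Mφ z - Mg z) := by
  classical
  obtain ⟨-, hnb⟩ := hproper
  set φr : En n → ℝ := fun x => (φ x).toReal with hφrdef
  have hφeq : ∀ x, φ x = ((φr x : ℝ) : EReal) := fun x => (EReal.coe_toReal (hdom x) (hnb x)).symm
  obtain ⟨xs, -, hFstar⟩ := hmin
  have hFstarR : ∀ x, Fstar ≤ φr x - g x := by
    intro x
    have h := hFstar x
    rw [hφeq x, ← EReal.coe_sub] at h
    exact_mod_cast h
  have hMφeq : ∀ z, Mφ z = φr (xφ z) + ‖xφ z - z‖ ^ 2 / (2 * μ) := by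
    intro z
    have h := (hφprox z).1
    rw [hφeq, ← EReal.coe_add] at h
    exact_mod_cast h
  intro α
  -- the sublevel set of F, as a real condition, is bounded
  have hS : Bornology.IsBounded {x : En n | φr x - g x ≤ α} := by
    have hset : {x : En n | φr x - g x ≤ α}
        = {x : En n | φ x - ((g x : ℝ) : EReal) ≤ (α : EReal)} := by
      ext x
      simp only [Set.mem_setOf_eq, hφeq x, ← EReal.coe_sub, EReal.coe_le_coe_iff]
    rw [hset]
    exact hFlb α
  obtain ⟨R₁, hR₁⟩ := (Metric.isBounded_iff_subset_closedBall (0 : En n)).1 hS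
  set R₂ : ℝ := max R₁ 0 + Real.sqrt (2 * μ * (α - Fstar)) with hR₂def
  have hR₂0 : 0 ≤ R₂ := add_nonneg (le_max_right _ _) (Real.sqrt_nonneg _)
  -- g is continuous, hence bounded on the relevant ball
  have hgc : Continuous g := by
    have h := hg.continuousOn isOpen_univ
    rwa [← continuousOn_univ]
  obtain ⟨K, hK⟩ := (isCompact_closedBall (0 : En n) (R₂ + μ)).exists_bound_of_continuousOn
    hgc.continuousOn
  have hK0 : 0 ≤ K := le_trans (norm_nonneg (g 0))
    (hK 0 (by simp [Metric.mem_closedBall]; positivity))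
  apply Bornology.IsBounded.subset (Metric.isBounded_closedBall (x := (0 : En n)) (r := R₂ + 2 * K))
  intro z hz
  simp only [Set.mem_setOf_eq] at hz
  set x := xφ z with hx
  set y := xg z with hy
  obtain ⟨hMg, hMgle, -⟩ := hgprox z
  have hopt : ∀ w, g y + ‖y - z‖ ^ 2 / (2 * μ) ≤ g w + ‖w - z‖ ^ 2 / (2 * μ) := by
    intro w
    rw [← hMg]
    exact hMgle w
  have hsub := subgrad_of_prox hg hμ hopt
  -- key inequality : F(x) + ‖x-y‖²/(2μ) ≤ F_μ(z) ≤ α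
  have hnorm : ‖x - z‖ ^ 2 = ‖x - y‖ ^ 2 + 2 * ⟪x - y, y - z⟫ + ‖y - z‖ ^ 2 := by
    rw [show x - z = (x - y) + (y - z) by abel, norm_add_sq_real]
  have hIc : ⟪z - y, x - y⟫ = -⟪x - y, y - z⟫ := by
    rw [real_inner_comm, ← neg_sub y z, inner_neg_right]
  have hμ2 : (0:ℝ) < 2 * μ := by positivity
  have hsplit : (‖x - y‖ ^ 2 + 2 * ⟪x - y, y - z⟫ + ‖y - z‖ ^ 2) / (2 * μ)
      = ‖x - y‖ ^ 2 / (2 * μ) + ⟪x - y, y - z⟫ / μ + ‖y - z‖ ^ 2 / (2 * μ) := by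
    field_simp
  have hsubx := hsub x
  have hIdiv : ⟪z - y, x - y⟫ / μ = -(⟪x - y, y - z⟫ / μ) := by rw [hIc]; ring
  have key : φr x - g x + ‖x - y‖ ^ 2 / (2 * μ) ≤ α := by
    have hM := hMφeq z
    rw [← hx] at hM
    rw [hM, hMg, hnorm, hsplit] at hz
    rw [hIdiv] at hsubx
    linarith
  have hA0 : 0 ≤ ‖x - y‖ ^ 2 / (2 * μ) := by positivity
  have hxmem : x ∈ Metric.closedBall (0 : En n) R₁ :=
    hR₁ (by simp only [Set.mem_setOf_eq]; linarith)
  have hxnorm : ‖x‖ ≤ max R₁ 0 := by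
    have := Metric.mem_closedBall.1 hxmem
    rw [dist_zero_right] at this
    exact this.trans (le_max_left _ _)
  have hxy2 : ‖x - y‖ ^ 2 ≤ 2 * μ * (α - Fstar) := by
    have hF := hFstarR x
    have h1 : ‖x - y‖ ^ 2 / (2 * μ) ≤ α - Fstar := by linarith
    rw [div_le_iff₀ hμ2] at h1
    calc ‖x - y‖ ^ 2 ≤ (α - Fstar) * (2 * μ) := h1
      _ = 2 * μ * (α - Fstar) := by ring
  have hxy : ‖x - y‖ ≤ Real.sqrt (2 * μ * (α - Fstar)) := by
    rw [show ‖x - y‖ = Real.sqrt (‖x - y‖ ^ 2) from (Real.sqrt_sq (norm_nonneg _)).symm]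
    exact Real.sqrt_le_sqrt hxy2
  have hynorm : ‖y‖ ≤ R₂ := by
    calc ‖y‖ = ‖x - (x - y)‖ := by rw [sub_sub_cancel]
      _ ≤ ‖x‖ + ‖x - y‖ := norm_sub_le _ _
      _ ≤ max R₁ 0 + Real.sqrt (2 * μ * (α - Fstar)) := add_le_add hxnorm hxy
  -- bound ‖z - y‖ using the subgradient inequality and boundedness of g
  have hzy : ‖z - y‖ ≤ 2 * K := by
    rcases eq_or_ne z y with h | h
    · simp [h]; positivity
    · have hzy0 : 0 < ‖z - y‖ := by
        rw [norm_pos_iff]; exact sub_ne_zero.2 h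
      set u : En n := ‖z - y‖⁻¹ • (z - y) with hu
      have hunorm : ‖u‖ = 1 := by
        rw [hu, norm_smul, norm_inv, norm_norm, inv_mul_cancel₀ hzy0.ne']
      have hw := hsub (y + μ • u)
      have hinner : ⟪z - y, (y + μ • u) - y⟫ = μ * ‖z - y‖ := by
        rw [add_sub_cancel_left, real_inner_smul_right, hu, real_inner_smul_right,
          real_inner_self_eq_norm_sq]
        field_simp
      have hcanc : μ * ‖z - y‖ / μ = ‖z - y‖ := by field_simp
      rw [hinner, hcanc] at hw
      -- hw : g y + ‖z - y‖ ≤ g (y + μ • u)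
      have hyb : ‖g y‖ ≤ K := hK y (by
        rw [Metric.mem_closedBall, dist_zero_right]; linarith)
      have hwb : ‖g (y + μ • u)‖ ≤ K := hK _ (by
        rw [Metric.mem_closedBall, dist_zero_right]
        calc ‖y + μ • u‖ ≤ ‖y‖ + ‖μ • u‖ := norm_add_le _ _
          _ = ‖y‖ + μ := by rw [norm_smul, Real.norm_eq_abs, abs_of_pos hμ, hunorm, mul_one]
          _ ≤ R₂ + μ := by linarith)
      rw [Real.norm_eq_abs, abs_le] at hyb hwb
      linarith [hyb.1, hwb.2]
  rw [Metric.mem_closedBall, dist_zero_right]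
  calc ‖z‖ = ‖y + (z - y)‖ := by rw [add_sub_cancel]
    _ ≤ ‖y‖ + ‖z - y‖ := norm_add_le _ _
    _ ≤ R₂ + 2 * K := add_le_add hynorm hzy
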